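/- Elliptic parameterization of the crown domain (Ξ = G·exp(iΩ)·x₀): the set of pairs (g·(e^{2iφ}·i), g·(−e^{2iφ}·i)) ∈ ℂ×ℂ, where g ranges over SL(2,ℝ) acting by Möbius transformations and φ ranges over the open interval (−π/4, π/4), is exactly the crown domain Ξ = {(z,w) ∈ ℂ×ℂ : Im z > 0 and Im w < 0}. -/

import Mathlib

open Real

/-- The Möbius action of `SL(2,ℝ)` on (nonreal) complex numbers. -/
noncomputable def moebSL2R (g : Matrix.SpecialLinearGroup (Fin 2) ℝ) (z : ℂ) : ℂ :=
  (((g : Matrix (Fin 2) (Fin 2) ℝ) 0 0 : ℂ) * z + ((g : Matrix (Fin 2) (Fin 2) ℝ) 0 1 : ℂ)) /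
    (((g : Matrix (Fin 2) (Fin 2) ℝ) 1 0 : ℂ) * z + ((g : Matrix (Fin 2) (Fin 2) ℝ) 1 1 : ℂ))

lemma sl2_det (g : Matrix.SpecialLinearGroup (Fin 2) ℝ) :
    (g : Matrix (Fin 2) (Fin 2) ℝ) 0 0 * (g : Matrix (Fin 2) (Fin 2) ℝ) 1 1
      - (g : Matrix (Fin 2) (Fin 2) ℝ) 0 1 * (g : Matrix (Fin 2) (Fin 2) ℝ) 1 0 = 1 := by
  have h := g.property
  rwa [Matrix.det_fin_two] at h

lemma moeb_denom_ne_zero (g : Matrix.SpecialLinearGroup (Fin 2) ℝ) {z : ℂ} (hz : z.im ≠ 0) :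
    (((g : Matrix (Fin 2) (Fin 2) ℝ) 1 0 : ℂ) * z + ((g : Matrix (Fin 2) (Fin 2) ℝ) 1 1 : ℂ)) ≠ 0 := by
  intro h
  have him : (g : Matrix (Fin 2) (Fin 2) ℝ) 1 0 * z.im = 0 := by
    have := congrArg Complex.im h
    simpa using this
  have hc : (g : Matrix (Fin 2) (Fin 2) ℝ) 1 0 = 0 := by
    rcases mul_eq_zero.mp him with h' | h'
    · exact h'
    · exact absurd h' hz
  have hre : (g : Matrix (Fin 2) (Fin 2) ℝ) 1 0 * z.re + (g : Matrix (Fin 2) (Fin 2) ℝ) 1 1 = 0 := by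
    have := congrArg Complex.re h
    simpa using this
  have hd : (g : Matrix (Fin 2) (Fin 2) ℝ) 1 1 = 0 := by rw [hc] at hre; linarith
  have := sl2_det g
  rw [hc, hd] at this
  simp at this

lemma moeb_im (g : Matrix.SpecialLinearGroup (Fin 2) ℝ) {z : ℂ} (hz : z.im ≠ 0) :
    (moebSL2R g z).im = z.im / Complex.normSq
      (((g : Matrix (Fin 2) (Fin 2) ℝ) 1 0 : ℂ) * z + ((g : Matrix (Fin 2) (Fin 2) ℝ) 1 1 : ℂ)) := by
  have hdet := sl2_det g
  have key : (((g : Matrix (Fin 2) (Fin 2) ℝ) 0 0 : ℂ) * z + ((g : Matrix (Fin 2) (Fin 2) ℝ) 0 1 : ℂ)).im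
        * (((g : Matrix (Fin 2) (Fin 2) ℝ) 1 0 : ℂ) * z + ((g : Matrix (Fin 2) (Fin 2) ℝ) 1 1 : ℂ)).re
      - (((g : Matrix (Fin 2) (Fin 2) ℝ) 0 0 : ℂ) * z + ((g : Matrix (Fin 2) (Fin 2) ℝ) 0 1 : ℂ)).re
        * (((g : Matrix (Fin 2) (Fin 2) ℝ) 1 0 : ℂ) * z + ((g : Matrix (Fin 2) (Fin 2) ℝ) 1 1 : ℂ)).im
      = z.im := by
    simp only [Complex.add_im, Complex.add_re, Complex.mul_im, Complex.mul_re,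
      Complex.ofReal_re, Complex.ofReal_im]
    linear_combination z.im * hdet
  rw [moebSL2R, Complex.div_im, div_sub_div_same, key]

lemma moeb_im_ne (h : Matrix.SpecialLinearGroup (Fin 2) ℝ) {z : ℂ} (hz : z.im ≠ 0) :
    (moebSL2R h z).im ≠ 0 := by
  rw [moeb_im h hz]
  exact div_ne_zero hz (Complex.normSq_pos.mpr (moeb_denom_ne_zero h hz)).ne'

lemma moeb_mul (g h : Matrix.SpecialLinearGroup (Fin 2) ℝ) {z : ℂ} (hz : z.im ≠ 0) :
    moebSL2R (g * h) z = moebSL2R g (moebSL2R h z) := by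
  have h1 := moeb_denom_ne_zero h hz
  have h2 := moeb_denom_ne_zero g (moeb_im_ne h hz)
  have h3 := moeb_denom_ne_zero (g*h) hz
  simp only [moebSL2R] at h2 h3 ⊢
  simp only [Matrix.SpecialLinearGroup.coe_mul, Matrix.mul_apply, Fin.sum_univ_two,
    Complex.ofReal_add, Complex.ofReal_mul] at h3 ⊢
  rw [div_eq_div_iff h3 h2]
  field_simp
  ring

lemma moeb_conj (g : Matrix.SpecialLinearGroup (Fin 2) ℝ) (z : ℂ) :
    moebSL2R g ((starRingEnd ℂ) z) = (starRingEnd ℂ) (moebSL2R g z) := by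
  simp [moebSL2R, map_div₀, map_add, map_mul, Complex.conj_ofReal]

lemma circle_sol (P Q U V : ℝ) (h : V*P = U*Q) :
    ∃ α β : ℝ, α^2+β^2 = 1 ∧ α*U = β*P ∧ α*V = β*Q := by
  by_cases hPU : P = 0 ∧ U = 0
  · obtain ⟨hP, hU⟩ := hPU
    by_cases hQV : Q = 0 ∧ V = 0
    · exact ⟨1, 0, by norm_num, by simp [hU, hP], by simp [hQV.1, hQV.2]⟩
    · have hpos : 0 < Q^2 + V^2 := by
        rcases not_and_or.mp hQV with h' | h' <;> positivity
      have hN : 0 < Real.sqrt (Q^2+V^2) := Real.sqrt_pos.mpr hpos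
      refine ⟨Q / Real.sqrt (Q^2+V^2), V / Real.sqrt (Q^2+V^2), ?_, by simp [hP, hU], by ring⟩
      rw [div_pow, div_pow, ← add_div, Real.sq_sqrt hpos.le, div_self hpos.ne']
  · have hpos : 0 < P^2 + U^2 := by
      rcases not_and_or.mp hPU with h' | h' <;> positivity
    have hN : 0 < Real.sqrt (P^2+U^2) := Real.sqrt_pos.mpr hpos
    refine ⟨P / Real.sqrt (P^2+U^2), U / Real.sqrt (P^2+U^2), ?_, by ring, ?_⟩
    · rw [div_pow, div_pow, ← add_div, Real.sq_sqrt hpos.le, div_self hpos.ne']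
    · field_simp
      linear_combination h

lemma crown_backward (z w : ℂ) (hz : 0 < z.im) (hw : w.im < 0) :
    ∃ g : Matrix.SpecialLinearGroup (Fin 2) ℝ, ∃ φ : ℝ,
      φ ∈ Set.Ioo (-(π / 4)) (π / 4) ∧
      moebSL2R g (Complex.exp (2 * φ * Complex.I) * Complex.I) = z ∧
      moebSL2R g (-(Complex.exp (2 * φ * Complex.I) * Complex.I)) = w := by
  set x := z.re with hx
  set y := z.im with hy'
  set u := w.re with hu
  set v := w.im with hv'
  have hy : 0 < y := hz
  have hv : v < 0 := hw
  set u2 := (u - x)/y with hu2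
  set v2 := -v/y with hv2
  have hv2pos : 0 < v2 := div_pos (neg_pos.mpr hv) hy
  set R := (u2^2 + (v2-1)^2)/v2 with hR
  have hRnn : 0 ≤ R := div_nonneg (by positivity) hv2pos.le
  set T := Real.sqrt R / 2 with hT
  have hTnn : 0 ≤ T := by positivity
  have hT4 : 4*T^2 = R := by rw [hT, div_pow, Real.sq_sqrt hRnn]; ring
  have hRv : R * v2 = u2^2 + (v2-1)^2 := by rw [hR]; field_simp
  have h1T : (0:ℝ) < 1 + T^2 := by positivity
  have hsq : 0 < Real.sqrt (1+T^2) := Real.sqrt_pos.mpr h1T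
  set c0 := 1/Real.sqrt (1+T^2) with hc0
  have hc0pos : 0 < c0 := by positivity
  set s := T * c0 with hs
  have hs2c2 : s^2 + c0^2 = 1 := by
    rw [hs, hc0]
    field_simp
    rw [Real.sq_sqrt h1T.le]
    ring
  clear_value x y u v u2 v2 R T c0 s
  -- trig facts
  have harg : 2 * (Real.arctan T / 2) = Real.arctan T := by ring
  have hcos : Real.cos (2 * (Real.arctan T / 2)) = c0 := by
    rw [harg, Real.cos_arctan, hc0]
  have hsin : Real.sin (2 * (Real.arctan T / 2)) = s := by
    rw [harg, Real.sin_arctan, hs, hc0]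
    ring
  -- the rotation parameters
  set P := 1 + 2*T*u2 - v2 with hP
  set Q := u2 + 2*T*v2 with hQ
  set U := u2 - 2*T with hU'
  set V := v2 - 1 with hV'
  clear_value P Q U V
  have key : V*P = U*Q := by
    rw [hV'] at hRv
    rw [hP, hQ, hU', hV']
    linear_combination v2*hT4 + hRv
  obtain ⟨α, β, hαβ, hUe, hVe⟩ := circle_sol P Q U V key
  -- square roots for the matrices
  set δ := Real.sqrt (Real.sqrt (1+T^2)) with hδ'
  have hδpos : 0 < δ := Real.sqrt_pos.mpr hsq
  have hδ2 : δ^2 = Real.sqrt (1+T^2) := Real.sq_sqrt hsq.le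
  have hδc0 : δ^2 * c0 = 1 := by rw [hδ2, hc0]; field_simp
  clear_value δ
  have hry : 0 < Real.sqrt y := Real.sqrt_pos.mpr hy
  have hryy : Real.sqrt y * Real.sqrt y = y := Real.mul_self_sqrt hy.le
  -- the three matrices
  set g1 : Matrix.SpecialLinearGroup (Fin 2) ℝ :=
    ⟨!![Real.sqrt y, x/Real.sqrt y; 0, 1/Real.sqrt y], by
      rw [Matrix.det_fin_two_of]; field_simp; simp⟩ with hg1
  set k : Matrix.SpecialLinearGroup (Fin 2) ℝ :=
    ⟨!![α, β; -β, α], by rw [Matrix.det_fin_two_of]; linear_combination hαβ⟩ with hk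
  set m : Matrix.SpecialLinearGroup (Fin 2) ℝ :=
    ⟨!![δ, δ*s; 0, δ*c0], by rw [Matrix.det_fin_two_of]; linear_combination hδc0⟩ with hm
  -- special points
  set p : ℂ := ((-s : ℝ) : ℂ) + (c0:ℝ)*Complex.I with hp
  set q : ℂ := ((s : ℝ) : ℂ) + (c0:ℝ)*Complex.I with hq
  set ξ : ℂ := ((2*T : ℝ) : ℂ) + Complex.I with hξ
  set zc : ℂ := ((u2 : ℝ) : ℂ) + (v2:ℝ)*Complex.I with hzc
  clear_value p q ξ zc
  have hpim : p.im = c0 := by simp [hp]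
  have hqim : q.im = c0 := by simp [hq]
  have hξim : ξ.im = 1 := by simp [hξ]
  have hpim' : p.im ≠ 0 := by rw [hpim]; exact hc0pos.ne'
  have hqim' : q.im ≠ 0 := by rw [hqim]; exact hc0pos.ne'
  have hξim' : ξ.im ≠ 0 := by rw [hξim]; norm_num
  have hIim' : (Complex.I).im ≠ 0 := by simp
  have hδc0C : ((δ*c0 : ℝ) : ℂ) ≠ 0 := by
    exact_mod_cast (mul_pos hδpos hc0pos).ne'
  -- step computations
  have e1 : moebSL2R m p = Complex.I := by
    simp only [moebSL2R, hm, Matrix.SpecialLinearGroup.coe_mk, Matrix.of_apply, Matrix.cons_val', Matrix.cons_val_zero, Matrix.cons_val_one,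
      Matrix.head_cons, Matrix.empty_val', Matrix.cons_val_fin_one, Matrix.head_fin_const]
    rw [div_eq_iff (by simpa using hδc0C), hp]
    push_cast
    ring
  have e2 : moebSL2R m q = ξ := by
    simp only [moebSL2R, hm, Matrix.SpecialLinearGroup.coe_mk, Matrix.of_apply, Matrix.cons_val', Matrix.cons_val_zero, Matrix.cons_val_one,
      Matrix.head_cons, Matrix.empty_val', Matrix.cons_val_fin_one, Matrix.head_fin_const]
    rw [div_eq_iff (by simpa using hδc0C), hq, hξ, hs]
    push_cast
    ring
  have hkden : ∀ ζ : ℂ, ζ.im ≠ 0 ∨ ζ.re ≠ 0 → True := fun _ _ => trivial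
  have e3 : moebSL2R k Complex.I = Complex.I := by
    simp only [moebSL2R, hk, Matrix.SpecialLinearGroup.coe_mk, Matrix.of_apply, Matrix.cons_val', Matrix.cons_val_zero, Matrix.cons_val_one,
      Matrix.head_cons, Matrix.empty_val', Matrix.cons_val_fin_one, Matrix.head_fin_const]
    rw [div_eq_iff]
    · push_cast
      linear_combination ((β:ℝ):ℂ) * Complex.I_sq
    · intro h0
      have h1 := congrArg Complex.re h0
      have h2 := congrArg Complex.im h0
      simp at h1 h2
      rw [h1, h2] at hαβ
      norm_num at hαβ
  have hden4 : ((-β : ℝ):ℂ) * ξ + ((α:ℝ):ℂ) ≠ 0 := by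
    intro h0
    rw [hξ] at h0
    have h2 : -β = 0 := by
      have := congrArg Complex.im h0
      simpa using this
    have hβ : β = 0 := by linarith
    have h1 : α = 0 := by
      have := congrArg Complex.re h0
      simpa [hβ] using this
    rw [h1, hβ] at hαβ
    norm_num at hαβ
  have e4 : moebSL2R k ξ = zc := by
    simp only [moebSL2R, hk, Matrix.SpecialLinearGroup.coe_mk, Matrix.of_apply, Matrix.cons_val',
      Matrix.cons_val_zero, Matrix.cons_val_one, Matrix.head_cons, Matrix.empty_val',
      Matrix.cons_val_fin_one, Matrix.head_fin_const]
    rw [div_eq_iff hden4, hξ, hzc]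
    rw [hP, hU'] at hUe
    rw [hQ, hV'] at hVe
    have hUeC : ((α:ℝ):ℂ) * ((u2:ℝ) - 2*(T:ℝ)) = ((β:ℝ):ℂ) * (1 + 2*(T:ℝ)*(u2:ℝ) - (v2:ℝ)) := by
      exact_mod_cast congrArg (fun t : ℝ => (t:ℂ)) hUe
    have hVeC : ((α:ℝ):ℂ) * ((v2:ℝ) - 1) = ((β:ℝ):ℂ) * ((u2:ℝ) + 2*(T:ℝ)*(v2:ℝ)) := by
      exact_mod_cast congrArg (fun t : ℝ => (t:ℂ)) hVe
    push_cast at hUeC hVeC ⊢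
    linear_combination (-1:ℂ)*hUeC - Complex.I*hVeC + ((β:ℝ):ℂ)*((v2:ℝ):ℂ)*Complex.I_sq
  have hg1den : ((0:ℝ):ℂ) * Complex.I + ((1/Real.sqrt y : ℝ):ℂ) ≠ 0 := by
    simp only [Complex.ofReal_zero, zero_mul, zero_add]
    exact_mod_cast (by positivity : (0:ℝ) < 1/Real.sqrt y).ne'
  have hyC : (Real.sqrt y : ℂ) * (Real.sqrt y : ℂ) = (y:ℂ) := by exact_mod_cast hryy
  have e5 : moebSL2R g1 Complex.I = z := by
    simp only [moebSL2R, hg1, Matrix.SpecialLinearGroup.coe_mk, Matrix.of_apply, Matrix.cons_val',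
      Matrix.cons_val_zero, Matrix.cons_val_one, Matrix.head_cons, Matrix.empty_val',
      Matrix.cons_val_fin_one, Matrix.head_fin_const]
    rw [div_eq_iff (by simpa using hg1den)]
    rw [show z = (x:ℂ) + (y:ℂ)*Complex.I by rw [hx, hy']; exact (Complex.re_add_im z).symm]
    have hryC : (Real.sqrt y : ℂ) ≠ 0 := by exact_mod_cast hry.ne'
    push_cast
    rw [show ((y:ℝ):ℂ) = (Real.sqrt y:ℂ)*(Real.sqrt y:ℂ) from hyC.symm]
    field_simp
    ring
  have e6 : moebSL2R g1 zc = (starRingEnd ℂ) w := by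
    simp only [moebSL2R, hg1, Matrix.SpecialLinearGroup.coe_mk, Matrix.of_apply, Matrix.cons_val',
      Matrix.cons_val_zero, Matrix.cons_val_one, Matrix.head_cons, Matrix.empty_val',
      Matrix.cons_val_fin_one, Matrix.head_fin_const]
    rw [div_eq_iff (by simpa using hg1den)]
    rw [show (starRingEnd ℂ) w = (u:ℂ) - (v:ℂ)*Complex.I by
      rw [hu, hv']
      simp [Complex.ext_iff]]
    have hryC : (Real.sqrt y : ℂ) ≠ 0 := by exact_mod_cast hry.ne'
    rw [hzc, hu2, hv2]
    push_cast
    rw [show ((y:ℝ):ℂ) = (Real.sqrt y:ℂ)*(Real.sqrt y:ℂ) from hyC.symm]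
    field_simp
    ring
  -- assemble
  set g : Matrix.SpecialLinearGroup (Fin 2) ℝ := g1 * (k * m) with hg
  have hgp : moebSL2R g p = z := by
    rw [hg, moeb_mul _ _ hpim', moeb_mul _ _ hpim', e1, e3, e5]
  have hgq : moebSL2R g q = (starRingEnd ℂ) w := by
    rw [hg, moeb_mul _ _ hqim', moeb_mul _ _ hqim', e2, e4, e6]
  have hnegp : -p = (starRingEnd ℂ) q := by
    rw [hp, hq]
    simp [Complex.ext_iff]
  have hgnegp : moebSL2R g (-p) = w := by
    rw [hnegp, moeb_conj, hgq, Complex.conj_conj]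
  -- the angle
  refine ⟨g, Real.arctan T / 2, ⟨?_, ?_⟩, ?_, ?_⟩
  · have h1 : 0 ≤ Real.arctan T := by
      rw [← Real.arctan_zero]
      exact Real.arctan_strictMono.monotone hTnn
    have h2 : 0 < π := Real.pi_pos
    linarith
  · have h1 : Real.arctan T < π/2 := Real.arctan_lt_pi_div_two T
    linarith
  · rw [show Complex.exp (2 * (Real.arctan T / 2 : ℝ) * Complex.I) * Complex.I = p by
      rw [show ((2:ℂ) * ((Real.arctan T / 2 : ℝ):ℂ) * Complex.I)
            = ((2 * (Real.arctan T / 2) : ℝ):ℂ) * Complex.I by push_cast; ring]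
      rw [Complex.exp_mul_I, ← Complex.ofReal_cos, ← Complex.ofReal_sin, hcos, hsin, hp,
        Complex.ofReal_neg]
      linear_combination ((s:ℝ):ℂ) * Complex.I_sq]
    exact hgp
  · rw [show Complex.exp (2 * (Real.arctan T / 2 : ℝ) * Complex.I) * Complex.I = p by
      rw [show ((2:ℂ) * ((Real.arctan T / 2 : ℝ):ℂ) * Complex.I)
            = ((2 * (Real.arctan T / 2) : ℝ):ℂ) * Complex.I by push_cast; ring]
      rw [Complex.exp_mul_I, ← Complex.ofReal_cos, ← Complex.ofReal_sin, hcos, hsin, hp,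
        Complex.ofReal_neg]
      linear_combination ((s:ℝ):ℂ) * Complex.I_sq]
    exact hgnegp

/-- Elliptic parameterization of the crown domain: `Ξ = G exp(iΩ)·x₀`. -/
theorem crown_elliptic_parameterization :
    {p : ℂ × ℂ | ∃ g : Matrix.SpecialLinearGroup (Fin 2) ℝ, ∃ φ : ℝ,
        φ ∈ Set.Ioo (-(π / 4)) (π / 4) ∧
        p = (moebSL2R g (Complex.exp (2 * φ * Complex.I) * Complex.I),
             moebSL2R g (-(Complex.exp (2 * φ * Complex.I) * Complex.I)))} =
      {p : ℂ × ℂ | 0 < p.1.im ∧ p.2.im < 0} := by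
  ext ⟨z, w⟩
  simp only [Set.mem_setOf_eq]
  constructor
  · rintro ⟨g, φ, ⟨hφ1, hφ2⟩, hzw⟩
    have hcos : 0 < Real.cos (2*φ) := by
      apply Real.cos_pos_of_mem_Ioo
      constructor
      · linarith
      · linarith
    have hexp : Complex.exp (2 * (φ:ℝ) * Complex.I) * Complex.I
        = ((-Real.sin (2*φ) : ℝ):ℂ) + ((Real.cos (2*φ) : ℝ):ℂ) * Complex.I := by
      rw [show ((2:ℂ) * (φ:ℝ) * Complex.I) = ((2*φ : ℝ):ℂ) * Complex.I by push_cast; ring]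
      rw [Complex.exp_mul_I, ← Complex.ofReal_cos, ← Complex.ofReal_sin, Complex.ofReal_neg]
      linear_combination ((Real.sin (2*φ):ℝ):ℂ) * Complex.I_sq
    have him1 : (Complex.exp (2 * (φ:ℝ) * Complex.I) * Complex.I).im = Real.cos (2*φ) := by
      rw [hexp]
      simp only [Complex.add_im, Complex.mul_im, Complex.ofReal_im, Complex.ofReal_re,
        Complex.I_im, Complex.I_re]
      ring
    have him2 : (-(Complex.exp (2 * (φ:ℝ) * Complex.I) * Complex.I)).im = -Real.cos (2*φ) := by
      rw [Complex.neg_im, him1]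
    have h1 : z = moebSL2R g (Complex.exp (2 * (φ:ℝ) * Complex.I) * Complex.I) :=
      congrArg Prod.fst hzw
    have h2 : w = moebSL2R g (-(Complex.exp (2 * (φ:ℝ) * Complex.I) * Complex.I)) :=
      congrArg Prod.snd hzw
    constructor
    · rw [h1, moeb_im g (by rw [him1]; exact hcos.ne'), him1]
      exact div_pos hcos (Complex.normSq_pos.mpr
        (moeb_denom_ne_zero g (by rw [him1]; exact hcos.ne')))
    · rw [h2, moeb_im g (by rw [him2]; exact (neg_neg_iff_pos.mpr hcos).ne), him2]
      apply div_neg_of_neg_of_pos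
      · linarith
      · exact Complex.normSq_pos.mpr
          (moeb_denom_ne_zero g (by rw [him2]; exact (neg_neg_iff_pos.mpr hcos).ne))
  · rintro ⟨hz, hw⟩
    obtain ⟨g, φ, hφ, h1, h2⟩ := crown_backward z w hz hw
    exact ⟨g, φ, hφ, by rw [← h1, ← h2]⟩
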